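/- Let X be a symmetric matrix with 0 ⪯ X ⪯ I and tr(X) = r, with eigenvalues λ_1(X) ≥ ... ≥ λ_n(X) and eigenvectors u_1,...,u_n, and let Π̃ = Σ_{i=1}^r u_i u_iᵀ. Suppose Π* is a rank-r orthogonal projection with ⟨X, Π*⟩ ≥ r − η for some η ≥ 0. Then ⟨Π*, Π̃⟩ ≥ r − 2η, and hence ‖Π̃ − Π*‖_F² ≤ 4η. -/

import Mathlib

open scoped BigOperators
open Matrix

noncomputable def lpNorm {n : ℕ} (p : ℝ) (v : Fin n → ℝ) : ℝ :=
  (∑ i, |v i| ^ p) ^ (1 / p)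

noncomputable def opNorm {m n : ℕ} (p q : ℝ) (A : Matrix (Fin m) (Fin n) ℝ) : ℝ :=
  sSup {t : ℝ | ∃ v : Fin n → ℝ, v ≠ 0 ∧ t = lpNorm q (A.mulVec v) / lpNorm p v}

noncomputable def frobSq {m n : ℕ} (A : Matrix (Fin m) (Fin n) ℝ) : ℝ :=
  ∑ i, ∑ j, (A i j) ^ 2


-- quadratic form of symmetric idempotent is nonneg
lemma aux_proj_quad_nonneg {n : ℕ} (P : Matrix (Fin n) (Fin n) ℝ)
    (hs : Pᵀ = P) (hi : P * P = P) (v : Fin n → ℝ) : 0 ≤ v ⬝ᵥ P.mulVec v := by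
  have h : v ⬝ᵥ P.mulVec v = (P.mulVec v) ⬝ᵥ (P.mulVec v) := by
    conv_lhs => rw [← hi]
    rw [← Matrix.mulVec_mulVec, Matrix.dotProduct_mulVec, ← Matrix.mulVec_transpose, hs]
  rw [h]
  exact Finset.sum_nonneg fun i _ => mul_self_nonneg _

lemma aux_trace_vmv_mul {n : ℕ} (v : Fin n → ℝ) (P : Matrix (Fin n) (Fin n) ℝ) :
    (Matrix.vecMulVec v v * P).trace = v ⬝ᵥ P.mulVec v := by
  simp only [Matrix.trace, Matrix.diag, Matrix.mul_apply, Matrix.vecMulVec_apply,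
    dotProduct, Matrix.mulVec]
  rw [Finset.sum_comm]
  refine Finset.sum_congr rfl fun j _ => ?_
  rw [Finset.mul_sum]
  refine Finset.sum_congr rfl fun k _ => ?_
  ring

lemma aux_vmv_mulVec {n : ℕ} (v w x : Fin n → ℝ) :
    (Matrix.vecMulVec v w).mulVec x = (w ⬝ᵥ x) • v := by
  funext k
  simp only [Matrix.mulVec, dotProduct, Matrix.vecMulVec_apply, Pi.smul_apply, smul_eq_mul]
  rw [Finset.sum_mul]
  exact Finset.sum_congr rfl fun j _ => by ring

lemma aux_vmv_mul_vmv {n : ℕ} (v w x y : Fin n → ℝ) :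
    Matrix.vecMulVec v w * Matrix.vecMulVec x y = (w ⬝ᵥ x) • Matrix.vecMulVec v y := by
  ext i j
  simp only [Matrix.mul_apply, Matrix.vecMulVec_apply, Matrix.smul_apply, smul_eq_mul, dotProduct]
  rw [Finset.sum_mul]
  exact Finset.sum_congr rfl fun k _ => by ring

lemma aux_trace_vmv {n : ℕ} (v w : Fin n → ℝ) :
    (Matrix.vecMulVec v w).trace = v ⬝ᵥ w := by
  simp [Matrix.trace, Matrix.diag, Matrix.vecMulVec_apply, dotProduct]

lemma aux_vmv_transpose {n : ℕ} (v w : Fin n → ℝ) :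
    (Matrix.vecMulVec v w)ᵀ = Matrix.vecMulVec w v := by
  ext i j; simp [Matrix.vecMulVec_apply, mul_comm]

lemma aux_trace_eq_rank {n : ℕ} (P : Matrix (Fin n) (Fin n) ℝ) (hi : P * P = P) :
    P.trace = (P.rank : ℝ) := by
  have hcomp : P.mulVecLin ∘ₗ P.mulVecLin = P.mulVecLin := by
    rw [← Matrix.mulVecLin_mul, hi]
  have hproj : LinearMap.IsProj (LinearMap.range P.mulVecLin) P.mulVecLin := by
    constructor
    · intro x; exact LinearMap.mem_range_self _ x
    · rintro x ⟨y, rfl⟩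
      exact congrFun (congrArg DFunLike.coe hcomp) y
  have h1 := hproj.trace
  have h2 : LinearMap.trace ℝ (Fin n → ℝ) P.mulVecLin = P.trace := by
    rw [LinearMap.trace_eq_matrix_trace ℝ (Pi.basisFun ℝ (Fin n)),
      LinearMap.toMatrix_eq_toMatrix', ← Matrix.toLin'_apply', LinearMap.toMatrix'_toLin']
  rw [Matrix.rank, ← h1, h2]


theorem stmt16 {n : ℕ} (r : ℕ) (hrn : r ≤ n) (η : ℝ) (hη : 0 ≤ η)
    (X : Matrix (Fin n) (Fin n) ℝ)
    (lam : Fin n → ℝ) (hmono : ∀ i j : Fin n, i ≤ j → lam j ≤ lam i)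
    (u : Fin n → Fin n → ℝ)
    (horth : ∀ i j, (u i) ⬝ᵥ (u j) = if i = j then (1 : ℝ) else 0)
    (hX : X = ∑ i, lam i • Matrix.vecMulVec (u i) (u i))
    (hX0 : X.PosSemidef) (hX1 : (1 - X).PosSemidef) (htr : X.trace = (r : ℝ))
    (Ptil Pstar : Matrix (Fin n) (Fin n) ℝ)
    (hPtil : Ptil = ∑ i ∈ Finset.univ.filter (fun i : Fin n => (i : ℕ) < r),
      Matrix.vecMulVec (u i) (u i))
    (hPs1 : Pstar.IsSymm) (hPs2 : Pstar * Pstar = Pstar) (hPsr : Pstar.rank = r)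
    (hcorr : (r : ℝ) - η ≤ (Xᵀ * Pstar).trace) :
    (r : ℝ) - 2 * η ≤ (Pstarᵀ * Ptil).trace ∧ frobSq (Ptil - Pstar) ≤ 4 * η := by
  classical
  set F : Finset (Fin n) := Finset.univ.filter (fun i : Fin n => (i : ℕ) < r) with hF
  set Fc : Finset (Fin n) := Finset.univ.filter (fun i : Fin n => ¬ ((i : ℕ) < r)) with hFc
  have hPsT : Pstarᵀ = Pstar := hPs1
  have huu : ∀ i, u i ⬝ᵥ u i = (1 : ℝ) := fun i => by simpa using horth i i
  set c : Fin n → ℝ := fun i => u i ⬝ᵥ Pstar.mulVec (u i) with hc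
  have hc0 : ∀ i, 0 ≤ c i := fun i => aux_proj_quad_nonneg Pstar hPsT hPs2 (u i)
  have hQT : (1 - Pstar)ᵀ = 1 - Pstar := by
    rw [Matrix.transpose_sub, Matrix.transpose_one, hPsT]
  have hQ2 : (1 - Pstar) * (1 - Pstar) = 1 - Pstar := by
    simp only [Matrix.sub_mul, Matrix.mul_sub, one_mul, mul_one, hPs2]
    abel
  have hc1 : ∀ i, c i ≤ 1 := by
    intro i
    have h := aux_proj_quad_nonneg (1 - Pstar) hQT hQ2 (u i)
    have e : u i ⬝ᵥ (1 - Pstar).mulVec (u i) = 1 - c i := by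
      rw [Matrix.sub_mulVec, dotProduct_sub, Matrix.one_mulVec, huu]
    rw [e] at h; linarith
  -- trace of X times anything
  have htr_mul : ∀ M : Matrix (Fin n) (Fin n) ℝ,
      (X * M).trace = ∑ i, lam i * (u i ⬝ᵥ M.mulVec (u i)) := by
    intro M
    rw [hX, Matrix.sum_mul, Matrix.trace_sum]
    refine Finset.sum_congr rfl fun i _ => ?_
    rw [smul_mul_assoc, Matrix.trace_smul, aux_trace_vmv_mul, smul_eq_mul]
  have hXsym : Xᵀ = X := by
    rw [hX, Matrix.transpose_sum]
    exact Finset.sum_congr rfl fun i _ => by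
      rw [Matrix.transpose_smul, aux_vmv_transpose]
  -- quadratic form gives eigenvalues
  have hquad : ∀ j, u j ⬝ᵥ X.mulVec (u j) = lam j := by
    intro j
    rw [← aux_trace_vmv_mul, Matrix.trace_mul_comm, htr_mul]
    have e : ∀ i, u i ⬝ᵥ (Matrix.vecMulVec (u j) (u j)).mulVec (u i)
        = if i = j then (1 : ℝ) else 0 := by
      intro i
      rw [aux_vmv_mulVec]
      by_cases h : i = j
      · subst h; simp [huu]
      · have h' : ¬ (j = i) := fun hh => h hh.symm
        simp [horth, h, h']
    rw [Finset.sum_congr rfl fun i _ => by rw [e i]]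
    simp
  have hl0 : ∀ j, 0 ≤ lam j := by
    intro j
    have h := hX0.dotProduct_mulVec_nonneg (u j)
    rw [star_trivial] at h
    rw [hquad j] at h
    exact h
  have hl1 : ∀ j, lam j ≤ 1 := by
    intro j
    have h := hX1.dotProduct_mulVec_nonneg (u j)
    rw [star_trivial] at h
    have e : u j ⬝ᵥ (1 - X).mulVec (u j) = 1 - lam j := by
      rw [Matrix.sub_mulVec, dotProduct_sub, Matrix.one_mulVec, huu, hquad]
    rw [e] at h; linarith
  -- trace X = sum of lam
  have htrlam : ∑ i, lam i = (r : ℝ) := by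
    rw [← htr, hX, Matrix.trace_sum]
    exact (Finset.sum_congr rfl fun i _ => by
      rw [Matrix.trace_smul, aux_trace_vmv, huu, smul_eq_mul, mul_one]).symm
  -- completeness : sum of u_i u_i^T = 1
  have hone : (∑ i, Matrix.vecMulVec (u i) (u i)) = (1 : Matrix (Fin n) (Fin n) ℝ) := by
    set U : Matrix (Fin n) (Fin n) ℝ := Matrix.of u with hU
    have hUUt : U * Uᵀ = 1 := by
      ext i j
      simpa [U, Matrix.mul_apply, Matrix.transpose_apply, Matrix.one_apply, dotProduct]
        using horth i j
    have hUtU : Uᵀ * U = 1 := mul_eq_one_comm.mp hUUt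
    rw [← hUtU]
    ext j k
    simp [Matrix.sum_apply, Matrix.vecMulVec_apply, Matrix.mul_apply,
      Matrix.transpose_apply, U]
  -- trace Pstar = r
  have htrPs : Pstar.trace = (r : ℝ) := by
    rw [aux_trace_eq_rank Pstar hPs2, hPsr]
  -- sum of c = r
  have hsumc : ∑ i, c i = (r : ℝ) := by
    have e : ∑ i, c i = ((∑ i, Matrix.vecMulVec (u i) (u i)) * Pstar).trace := by
      rw [Matrix.sum_mul, Matrix.trace_sum]
      exact Finset.sum_congr rfl fun i _ => (aux_trace_vmv_mul _ _).symm
    rw [hone, one_mul, htrPs] at e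
    exact e
  -- correlation rewritten
  have hXP : (Xᵀ * Pstar).trace = ∑ i, lam i * c i := by
    rw [hXsym, htr_mul Pstar]
  rw [hXP] at hcorr
  -- card of F
  have hcard : F.card = r := by
    have e : F = Finset.map (Fin.castLEEmb hrn) Finset.univ := by
      ext j
      simp only [hF, Finset.mem_filter, Finset.mem_univ, true_and, Finset.mem_map]
      constructor
      · intro hj
        exact ⟨⟨(j : ℕ), hj⟩, by ext; simp⟩
      · rintro ⟨i, rfl⟩
        simpa using i.isLt
    rw [e, Finset.card_map, Finset.card_univ, Fintype.card_fin]
  -- trace Pstar^T Ptil = sum over F of c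
  have hPtilTr : (Pstarᵀ * Ptil).trace = ∑ i ∈ F, c i := by
    rw [hPsT, Matrix.trace_mul_comm, hPtil, Matrix.sum_mul, Matrix.trace_sum]
    exact Finset.sum_congr rfl fun i _ => aux_trace_vmv_mul _ _
  -- sum splits
  have hsplitc : (∑ i ∈ F, c i) + (∑ i ∈ Fc, c i) = (r : ℝ) := by
    rw [hF, hFc, Finset.sum_filter_add_sum_filter_not, hsumc]
  have hsplitl : (∑ i ∈ F, lam i) + (∑ i ∈ Fc, lam i) = (r : ℝ) := by
    rw [hF, hFc, Finset.sum_filter_add_sum_filter_not, htrlam]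
  have hsplitlc : (∑ i ∈ F, lam i * c i) + (∑ i ∈ Fc, lam i * c i)
      = ∑ i, lam i * c i := by
    rw [hF, hFc, Finset.sum_filter_add_sum_filter_not]
  -- key bound : sum lam c <= sum_F lam
  have hkey : ∑ i, lam i * c i ≤ ∑ i ∈ F, lam i := by
    rcases lt_or_eq_of_le hrn with hr | hr
    · set t : ℝ := lam ⟨r, hr⟩ with ht
      have ht0 : 0 ≤ t := hl0 _
      have e1 : ∑ i ∈ F, (lam i * c i - lam i) ≤ ∑ i ∈ F, t * (c i - 1) := by
        refine Finset.sum_le_sum fun i hi => ?_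
        have hir : (i : ℕ) < r := by simpa [hF] using hi
        have hti : t ≤ lam i := hmono i ⟨r, hr⟩ (by simp [Fin.le_def]; omega)
        nlinarith [mul_nonneg (sub_nonneg.mpr hti) (sub_nonneg.mpr (hc1 i))]
      have e2 : ∑ i ∈ Fc, lam i * c i ≤ ∑ i ∈ Fc, t * c i := by
        refine Finset.sum_le_sum fun i hi => ?_
        have hir : ¬ (i : ℕ) < r := by simpa [hFc] using hi
        have hti : lam i ≤ t := hmono ⟨r, hr⟩ i (by simp [Fin.le_def]; omega)
        exact mul_le_mul_of_nonneg_right hti (hc0 i)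
      have e3 : ∑ i ∈ F, t * (c i - 1) = t * ((∑ i ∈ F, c i) - (r : ℝ)) := by
        rw [Finset.sum_congr rfl (fun i (_ : i ∈ F) => mul_sub t (c i) 1),
          Finset.sum_sub_distrib, Finset.sum_const, hcard, mul_sub, Finset.mul_sum]
        simp [nsmul_eq_mul, mul_comm]
      have e4 : ∑ i ∈ Fc, t * c i = t * ∑ i ∈ Fc, c i := by rw [Finset.mul_sum]
      have e5 : ∑ i ∈ F, (lam i * c i - lam i)
          = (∑ i ∈ F, lam i * c i) - ∑ i ∈ F, lam i := by
        rw [Finset.sum_sub_distrib]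
      have e6 : t * ((∑ i ∈ F, c i) - (r : ℝ)) + t * (∑ i ∈ Fc, c i) = 0 := by
        have : (∑ i ∈ Fc, c i) = (r : ℝ) - ∑ i ∈ F, c i := by linarith [hsplitc]
        rw [this]; ring
      rw [e5] at e1
      rw [e3] at e1
      rw [e4] at e2
      linarith [hsplitlc]
    · -- r = n : Fc is empty
      have hFce : Fc = ∅ := by
        rw [hFc]
        refine Finset.filter_false_of_mem fun i _ => ?_
        exact not_not_intro (hr ▸ i.isLt)
      have e2 : ∑ i ∈ Fc, lam i * c i = 0 := by rw [hFce, Finset.sum_empty]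
      have e1 : ∑ i ∈ F, lam i * c i ≤ ∑ i ∈ F, lam i := by
        refine Finset.sum_le_sum fun i _ => ?_
        nlinarith [hl0 i, hc1 i, hc0 i]
      linarith [hsplitlc]
  -- hence tail eigenvalue mass small
  have htail : ∑ i ∈ Fc, lam i ≤ η := by
    have : (r : ℝ) - η ≤ ∑ i ∈ F, lam i := le_trans hcorr hkey
    linarith [hsplitl]
  -- lam*c <= c on F, lam*c <= lam off F
  have hb1 : ∑ i ∈ F, lam i * c i ≤ ∑ i ∈ F, c i :=
    Finset.sum_le_sum fun i _ => mul_le_of_le_one_left (hc0 i) (hl1 i)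
  have hb2 : ∑ i ∈ Fc, lam i * c i ≤ ∑ i ∈ Fc, lam i :=
    Finset.sum_le_sum fun i _ => mul_le_of_le_one_right (hl0 i) (hc1 i)
  have hmain : (r : ℝ) - 2 * η ≤ (Pstarᵀ * Ptil).trace := by
    rw [hPtilTr]
    linarith [hsplitlc]
  refine ⟨hmain, ?_⟩
  -- Frobenius part
  have hPtT : Ptilᵀ = Ptil := by
    rw [hPtil, Matrix.transpose_sum]
    exact Finset.sum_congr rfl fun i _ => aux_vmv_transpose _ _
  have hPt2 : Ptil * Ptil = Ptil := by
    rw [hPtil, Finset.sum_mul_sum]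
    refine Finset.sum_congr rfl fun i hi => ?_
    rw [Finset.sum_congr rfl fun j (_ : j ∈ F) => by
      rw [aux_vmv_mul_vmv, horth]]
    simp [ite_smul, Finset.sum_ite_eq, hi]
  have htrPt : Ptil.trace = (r : ℝ) := by
    rw [hPtil, Matrix.trace_sum]
    rw [Finset.sum_congr rfl fun i _ => by rw [aux_trace_vmv, huu]]
    rw [Finset.sum_const, hcard, nsmul_eq_mul, mul_one]
  have e0 : frobSq (Ptil - Pstar) = ((Ptil - Pstar)ᵀ * (Ptil - Pstar)).trace := by
    simp only [frobSq, Matrix.trace, Matrix.diag, Matrix.mul_apply, Matrix.transpose_apply, pow_two]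
    exact Finset.sum_comm
  rw [e0, Matrix.transpose_sub, hPtT, hPsT, Matrix.sub_mul, Matrix.mul_sub, Matrix.mul_sub,
    Matrix.trace_sub, Matrix.trace_sub, Matrix.trace_sub, hPt2, hPs2,
    Matrix.trace_mul_comm Ptil Pstar, htrPt, htrPs]
  rw [hPsT] at hmain
  linarith
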